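/- arXiv:math/9807155 — 2 statements merged into one kernel-verified Lean document; each statement's English description precedes it below -/
import Mathlib

section
/- Let p > 0 and q be coprime integers, and let q* be an integer with 0 < q* < p and p* an integer satisfying p*p + q*q = 1. Then p·(-12·s(q,p)) + (q + q*) is an integer divisible by p; equivalently, there exists an integer b with -12·s(q,p) = b - (q + q*)/p. -/
/-- The sawtooth function `((x))`. -/
noncomputable def saw (x : ℚ) : ℚ := if x.den = 1 then 0 else x - ⌊x⌋ - 1/2

/-- The Dedekind sum `s(q, p) = ∑_{k=0}^{p-1} ((k/p)) ((kq/p))`. -/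
noncomputable def dedekindSum (q p : ℤ) : ℚ :=
  ∑ k ∈ Finset.range p.natAbs, saw (k / p) * saw (k * q / p)

lemma six_sq (n : ℕ) : 6 * ∑ k ∈ Finset.range n, (k:ℤ)^2 = n*(n-1)*(2*n-1) := by
  induction n with
  | zero => simp
  | succ m ih =>
    rw [Finset.sum_range_succ, mul_add, ih]
    push_cast
    ring

lemma saw_int_div (a p : ℤ) (hp : 0 < p) (h : ¬ p ∣ a) :
    saw ((a : ℚ) / p) = ((a % p : ℤ) : ℚ) / p - 1/2 := by
  obtain ⟨d, rfl⟩ : ∃ d : ℕ, p = (d:ℤ) := ⟨p.toNat, (Int.toNat_of_nonneg hp.le).symm⟩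
  have hp0 : (d:ℤ) ≠ 0 := hp.ne'
  have hden : ((a:ℚ)/((d:ℤ):ℚ)).den ≠ 1 := by
    rw [Ne, Rat.den_div_intCast_eq_one_iff a _ hp0]; exact h
  have hfl : ⌊(a:ℚ)/((d:ℤ):ℚ)⌋ = a / (d:ℤ) := by
    rw [Int.cast_natCast]
    exact Rat.floor_intCast_div_natCast a d
  rw [saw, if_neg hden, hfl, Int.emod_def]
  have hQ : ((d:ℕ):ℚ) ≠ 0 := Nat.cast_ne_zero.mpr (by exact_mod_cast hp0)
  push_cast
  field_simp

theorem stmt_2 (p q qs ps : ℤ) (hp : 0 < p) (hpq : IsCoprime p q)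
    (hqs : 0 < qs) (hqs' : qs < p) (hinv : ps * p + qs * q = 1) :
    ∃ b : ℤ, (-12 : ℚ) * dedekindSum q p = (b : ℚ) - ((q : ℚ) + qs) / p := by
  set n := p.natAbs with hndef
  have hn : (n:ℤ) = p := Int.natAbs_of_nonneg hp.le
  have hn1 : 1 ≤ n := by omega
  have hp0 : p ≠ 0 := hp.ne'
  have hpQ : (p:ℚ) ≠ 0 := Int.cast_ne_zero.mpr hp0
  set R : ℕ → ℤ := fun k => ((k:ℤ)*q) % p with hRdef
  set A : ℕ → ℤ := fun k => ((k:ℤ)*q) / p with hAdef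
  have hRA : ∀ k : ℕ, (k:ℤ)*q = p * A k + R k := fun k => (Int.mul_ediv_add_emod _ _).symm
  have hR0 : ∀ k, 0 ≤ R k := fun k => Int.emod_nonneg _ hp0
  have hRlt : ∀ k, R k < p := fun k => Int.emod_lt_of_pos _ hp
  -- bijection: summing f over R k equals summing f over k
  have hbij : ∀ f : ℤ → ℤ, ∑ k ∈ Finset.range n, f (R k) = ∑ k ∈ Finset.range n, f (k:ℤ) := by
    intro f
    have hmem : ∀ (r : ℤ) (a : ℕ), a ∈ Finset.range n → (((a:ℤ)*r) % p).toNat ∈ Finset.range n := by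
      intro r a _
      have h1 : 0 ≤ ((a:ℤ)*r) % p := Int.emod_nonneg _ hp0
      have h2 : ((a:ℤ)*r) % p < p := Int.emod_lt_of_pos _ hp
      rw [Finset.mem_range]
      omega
    have hcancel : ∀ (r r' : ℤ), r * r' % p = 1 % p → ∀ a : ℕ, a ∈ Finset.range n →
        ((((a:ℤ)*r) % p) * r') % p = (a:ℤ) := by
      intro r r' hrr a ha
      have ha' : (a:ℤ) < p := by
        rw [Finset.mem_range] at ha; omega
      have h1 : ((((a:ℤ)*r) % p) * r') % p = ((a:ℤ)*(r*r')) % p := by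
        rw [Int.mul_emod, Int.emod_emod_of_dvd _ dvd_rfl, ← Int.mul_emod, mul_assoc]
      rw [h1, Int.mul_emod, hrr, ← Int.mul_emod, mul_one]
      exact Int.emod_eq_of_lt (by positivity) ha'
    have hq1 : q * qs % p = 1 % p := by
      conv_rhs => rw [← hinv]
      rw [show ps * p + qs * q = q * qs + ps * p by ring, Int.add_mul_emod_self_right]
    have hq2 : qs * q % p = 1 % p := by rw [mul_comm]; exact hq1
    refine Finset.sum_nbij' (i := fun k => (((k:ℤ)*q) % p).toNat)
      (j := fun k => (((k:ℤ)*qs) % p).toNat) (hmem q) (hmem qs) ?_ ?_ ?_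
    · intro a ha
      have h0 : 0 ≤ ((a:ℤ)*q) % p := Int.emod_nonneg _ hp0
      have hk := hcancel q qs hq1 a ha
      simp only [Int.toNat_of_nonneg h0, hk, Int.toNat_natCast]
    · intro a ha
      have h0 : 0 ≤ ((a:ℤ)*qs) % p := Int.emod_nonneg _ hp0
      have hk := hcancel qs q hq2 a ha
      simp only [Int.toNat_of_nonneg h0, hk, Int.toNat_natCast]
    · intro a _
      have h0 : 0 ≤ ((a:ℤ)*q) % p := Int.emod_nonneg _ hp0
      simp only [hRdef, Int.toNat_of_nonneg h0]
  -- integer sums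
  set S1 : ℤ := ∑ k ∈ Finset.range n, (k:ℤ) with hS1def
  set S2 : ℤ := ∑ k ∈ Finset.range n, (k:ℤ)^2 with hS2def
  set U : ℤ := ∑ k ∈ Finset.range n, (k:ℤ) * A k with hUdef
  set V : ℤ := ∑ k ∈ Finset.range n, (A k)^2 with hVdef
  set T : ℤ := ∑ k ∈ Finset.range n, (k:ℤ) * R k with hTdef
  have hSR : ∑ k ∈ Finset.range n, R k = S1 := hbij id
  have hSR2 : ∑ k ∈ Finset.range n, (R k)^2 = S2 := hbij (·^2)
  have hS1 : 2 * S1 = p * (p - 1) := by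
    have := Finset.sum_range_id_mul_two n
    have hcast : S1 = ((∑ i ∈ Finset.range n, i : ℕ) : ℤ) := by push_cast [hS1def]; rfl
    have h2 : ((∑ i ∈ Finset.range n, i : ℕ) : ℤ) * 2 = (n:ℤ) * ((n:ℤ) - 1) := by
      have h3 : ((n*(n-1) : ℕ) : ℤ) = (n:ℤ) * ((n:ℤ) - 1) := by
        push_cast [Nat.cast_sub hn1]; ring
      rw [← h3]
      exact_mod_cast this
    rw [hn] at h2
    linarith [h2, hcast]
  have hS2 : 6 * S2 = p * (p - 1) * (2 * p - 1) := by
    have := six_sq n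
    rw [hn] at this
    exact this
  have hT : T = q * S2 - p * U := by
    rw [hTdef, hS2def, hUdef, Finset.mul_sum, Finset.mul_sum, ← Finset.sum_sub_distrib]
    apply Finset.sum_congr rfl
    intro k _
    linear_combination (-(k:ℤ)) * hRA k
  have hU : 2 * p * q * U = (q^2 - 1) * S2 + p^2 * V := by
    have hexp : ∑ k ∈ Finset.range n, (R k)^2
        = q^2 * S2 - 2*p*q*U + p^2 * V := by
      rw [hS2def, hUdef, hVdef, Finset.mul_sum, Finset.mul_sum, Finset.mul_sum]
      rw [← Finset.sum_sub_distrib, ← Finset.sum_add_distrib]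
      apply Finset.sum_congr rfl
      intro k _
      linear_combination (p * A k - (k:ℤ)*q - R k) * hRA k
    rw [hSR2] at hexp
    linarith
  have hU6 : 12 * q * U = (q^2 - 1) * (p - 1) * (2*p - 1) + 6 * p * V := by
    have h1 : p * (12 * q * U) = p * ((q^2 - 1) * (p - 1) * (2*p - 1) + 6 * p * V) := by
      linear_combination 6*hU + (q^2-1)*hS2
    exact mul_left_cancel₀ hp0 h1
  -- the integer M with 12 p s = M
  set M : ℤ := 2*q*(p-1)*(2*p-1) - 12*U - 3*p*(p-1) with hMdef
  have hqdvd : p ∣ (q + qs - M) * q := by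
    refine ⟨(q^2+1)*(3-2*p) - ps + 6*V + 3*q*(p-1), ?_⟩
    have h1 : qs * q = 1 - ps * p := by linarith
    rw [hMdef]
    linear_combination h1 + hU6
  have hdvd : p ∣ q + qs - M := hpq.dvd_of_dvd_mul_right hqdvd
  obtain ⟨c, hc⟩ := hdvd
  refine ⟨c, ?_⟩
  -- rational computation of the Dedekind sum
  have hnQ : ((n:ℕ) : ℚ) = (p : ℚ) := by rw [← hn, Int.cast_natCast]
  have hs : dedekindSum q p = ∑ k ∈ Finset.range n,
      (if k = 0 then 0 else ((k:ℚ)/p - 1/2) * (((R k : ℤ):ℚ)/p - 1/2)) := by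
    rw [dedekindSum]
    apply Finset.sum_congr rfl
    intro k hk
    rcases eq_or_ne k 0 with rfl | hk0
    · simp [saw]
    · rw [if_neg hk0]
      have hkn : k < n := Finset.mem_range.mp hk
      have hk1 : 1 ≤ k := Nat.one_le_iff_ne_zero.mpr hk0
      have hd1 : ¬ p ∣ (k:ℤ) := by
        intro h
        have := Int.le_of_dvd (by exact_mod_cast hk1) h
        omega
      have hd2 : ¬ p ∣ (k:ℤ) * q := fun h => hd1 (hpq.dvd_of_dvd_mul_right h)
      have hcast : ((k:ℕ):ℚ) = (((k:ℤ)):ℚ) := by push_cast; ring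
      have hmod : (k:ℤ) % p = (k:ℤ) := Int.emod_eq_of_lt (by positivity) (by omega)
      have e1 : saw ((k:ℚ) / p) = ((k:ℚ))/p - 1/2 := by
        rw [hcast, saw_int_div (k:ℤ) p hp hd1, hmod]
      have e2 : saw ((k:ℚ) * (q:ℚ) / p) = ((R k : ℤ):ℚ)/p - 1/2 := by
        have h5 := saw_int_div ((k:ℤ)*q) p hp hd2
        push_cast at h5 ⊢
        rw [h5]
      rw [e1, e2]
  have hfull : dedekindSum q p = (∑ k ∈ Finset.range n,
      ((k:ℚ)/p - 1/2) * (((R k : ℤ):ℚ)/p - 1/2)) - 1/4 := by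
    rw [hs]
    have : ∀ k ∈ Finset.range n,
        (if k = 0 then (0:ℚ) else ((k:ℚ)/p - 1/2) * (((R k : ℤ):ℚ)/p - 1/2))
        = ((k:ℚ)/p - 1/2) * (((R k : ℤ):ℚ)/p - 1/2) - (if k = 0 then 1/4 else 0) := by
      intro k _
      rcases eq_or_ne k 0 with rfl | hk0
      · have : R 0 = 0 := by simp [hRdef]
        simp [this]
        norm_num
      · simp [hk0]
    rw [Finset.sum_congr rfl this, Finset.sum_sub_distrib]
    congr 1
    rw [Finset.sum_ite_eq' (Finset.range n) 0 (fun _ => (1/4:ℚ))]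
    have h0n : (0:ℕ) ∈ Finset.range n := Finset.mem_range.mpr (by omega)
    rw [if_pos h0n]
  -- expand the sum
  have hexpand : dedekindSum q p
      = (T:ℚ)/(p:ℚ)^2 - ((S1:ℚ) + (S1:ℚ))/(2*p) + (n:ℚ)/4 - 1/4 := by
    rw [hfull]
    have : ∀ k ∈ Finset.range n,
        ((k:ℚ)/p - 1/2) * (((R k : ℤ):ℚ)/p - 1/2)
        = ((k:ℚ) * ((R k:ℤ):ℚ))/(p:ℚ)^2 - ((k:ℚ) + ((R k:ℤ):ℚ))/(2*p) + 1/4 := by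
      intro k _
      field_simp
      ring
    rw [Finset.sum_congr rfl this]
    rw [Finset.sum_add_distrib, Finset.sum_sub_distrib]
    have c1 : ∑ k ∈ Finset.range n, ((k:ℚ) * ((R k:ℤ):ℚ))/(p:ℚ)^2 = (T:ℚ)/(p:ℚ)^2 := by
      rw [← Finset.sum_div, hTdef]
      push_cast
      rfl
    have c2 : ∑ k ∈ Finset.range n, ((k:ℚ) + ((R k:ℤ):ℚ))/(2*p) = ((S1:ℚ) + (S1:ℚ))/(2*p) := by
      rw [← Finset.sum_div, Finset.sum_add_distrib]
      congr 2
      · rw [hS1def]; push_cast; rfl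
      · rw [← hSR]; push_cast; rfl
    have c3 : ∑ _k ∈ Finset.range n, (1/4:ℚ) = (n:ℚ)/4 := by
      rw [Finset.sum_const, Finset.card_range]
      ring
    rw [c1, c2, c3]
  -- finish: cast all integer identities to ℚ and beat it with field_simp/linear_combination
  have e1 : (12:ℚ) * (T:ℚ) = 2*(p:ℚ)*(q:ℚ)*((p:ℚ)-1)*(2*(p:ℚ)-1) - 12*(p:ℚ)*(U:ℚ) := by
    have h12 : 12 * T = 2*p*q*(p-1)*(2*p-1) - 12*p*U := by linear_combination 12*hT + 2*q*hS2
    exact_mod_cast congrArg (fun x : ℤ => (x:ℚ)) h12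
  have e2 : (2:ℚ) * (S1:ℚ) = (p:ℚ)*((p:ℚ)-1) := by exact_mod_cast congrArg (fun x : ℤ => (x:ℚ)) hS1
  have e3 : (q:ℚ) + (qs:ℚ) - ((2*(q:ℚ)*((p:ℚ)-1)*(2*(p:ℚ)-1) - 12*(U:ℚ) - 3*(p:ℚ)*((p:ℚ)-1))) = (p:ℚ) * (c:ℚ) := by
    have : (q:ℚ) + (qs:ℚ) - (M:ℚ) = (p:ℚ) * (c:ℚ) := by exact_mod_cast congrArg (fun x : ℤ => (x:ℚ)) hc
    rw [hMdef] at this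
    push_cast at this ⊢
    linarith
  have hX : (-12:ℚ)*(T:ℚ) + 12*(p:ℚ)*(S1:ℚ) - 3*(p:ℚ)^3 + 3*(p:ℚ)^2 - (c:ℚ)*(p:ℚ)^2 + (q:ℚ)*(p:ℚ) + (qs:ℚ)*(p:ℚ) = 0 := by
    linear_combination (-1:ℚ)*e1 + 6*(p:ℚ)*e2 + (p:ℚ)*e3
  have hfrac : (-12:ℚ) * ((T:ℚ)/(p:ℚ)^2 - ((S1:ℚ)+(S1:ℚ))/(2*(p:ℚ)) + (p:ℚ)/4 - 1/4) - ((c:ℚ) - ((q:ℚ)+(qs:ℚ))/(p:ℚ))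
      = ((-12:ℚ)*(T:ℚ) + 12*(p:ℚ)*(S1:ℚ) - 3*(p:ℚ)^3 + 3*(p:ℚ)^2 - (c:ℚ)*(p:ℚ)^2 + (q:ℚ)*(p:ℚ) + (qs:ℚ)*(p:ℚ))/(p:ℚ)^2 := by
    field_simp
    ring
  rw [hexpand, hnQ]
  rw [hX] at hfrac
  have h9 := hfrac
  rw [zero_div] at h9
  linarith [h9]
end

section
/- Let p > 0, q with gcd(p,q) = 1, and let q* ∈ (0,p), p* satisfy p*p + q*q = 1. Let r be odd with c = gcd(p, r) > 1 and suppose c | q* + η for η ∈ {1, -1}. Then the exponent expression -( (r/c)' (q + q* - η p* p) )/(pc) + 2η (p/c)'/(rc) - 12 s(q,p)/r, multiplied by rc·p, is an integer; i.e., e_r^{12s(q,p)}·e_{pc}^{-(r/c)'(q+q*-ηp*p)}·e_{rc}^{2η(p/c)'} is an r·c·p-th root of unity that is in fact an r-th root of unity e_r^k for some integer k. -/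
open Complex

private lemma sum_id' (n : ℕ) : 2 * ∑ k ∈ Finset.range n, (k : ℤ) = n * (n - 1) := by
  induction n with
  | zero => simp
  | succ n ih => rw [Finset.sum_range_succ, mul_add, ih]; push_cast; ring

private lemma sum_sq' (n : ℕ) : 6 * ∑ k ∈ Finset.range n, (k : ℤ)^2 = n * (n - 1) * (2 * n - 1) := by
  induction n with
  | zero => simp
  | succ n ih => rw [Finset.sum_range_succ, mul_add, ih]; push_cast; ring

private lemma sum_perm' (p q qs ps : ℤ) (hp : 0 < p) (hinv : ps * p + qs * q = 1)
    (F : ℤ → ℤ) :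
    ∑ k ∈ Finset.range p.natAbs, F ((k * q) % p) = ∑ k ∈ Finset.range p.natAbs, F k := by
  have hn : ((p.natAbs : ℤ)) = p := Int.natAbs_of_nonneg hp.le
  have key : ∀ a b : ℤ, ps * p + b * a = 1 → ∀ x : ℤ, 0 ≤ x → x < p → (x * a % p * b) % p = x := by
    intro a b hab x h0 h1
    rw [Int.mul_emod, Int.emod_emod_of_dvd _ dvd_rfl, ← Int.mul_emod,
      show x * a * b = x + p * (-(x * ps)) by linear_combination x * hab,
      Int.add_mul_emod_self_left]
    exact Int.emod_eq_of_lt h0 h1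
  refine Finset.sum_nbij' (fun k => ((k * q) % p).toNat) (fun k => ((k * qs) % p).toNat)
    ?_ ?_ ?_ ?_ ?_
  · intro a _
    have h1 := Int.emod_nonneg ((a : ℤ) * q) hp.ne'
    have h2 := Int.emod_lt_of_pos ((a : ℤ) * q) hp
    simp only [Finset.mem_range]; omega
  · intro a _
    have h1 := Int.emod_nonneg ((a : ℤ) * qs) hp.ne'
    have h2 := Int.emod_lt_of_pos ((a : ℤ) * qs) hp
    simp only [Finset.mem_range]; omega
  · intro a ha
    simp only [Finset.mem_range] at ha
    have h0 : (0:ℤ) ≤ (a:ℤ) := Int.natCast_nonneg a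
    have h1 : ((a:ℤ)) < p := by omega
    have h2 := Int.emod_nonneg ((a : ℤ) * q) hp.ne'
    have hkey := key q qs (by linarith [hinv]) a h0 h1
    show ((((a : ℤ) * q % p).toNat : ℤ) * qs % p).toNat = a
    rw [Int.toNat_of_nonneg h2, hkey, Int.toNat_natCast]
  · intro a ha
    simp only [Finset.mem_range] at ha
    have h0 : (0:ℤ) ≤ (a:ℤ) := Int.natCast_nonneg a
    have h1 : ((a:ℤ)) < p := by omega
    have h2 := Int.emod_nonneg ((a : ℤ) * qs) hp.ne'
    have hkey := key qs q (by linarith [hinv]) a h0 h1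
    show ((((a : ℤ) * qs % p).toNat : ℤ) * q % p).toNat = a
    rw [Int.toNat_of_nonneg h2, hkey, Int.toNat_natCast]
  · intro a _
    have h2 := Int.emod_nonneg ((a : ℤ) * q) hp.ne'
    show F ((a : ℤ) * q % p) = F (((a : ℤ) * q % p).toNat : ℤ)
    rw [Int.toNat_of_nonneg h2]





private lemma saw_eval (p a : ℤ) (hp : 0 < p) (h : ¬ p ∣ a) :
    saw ((a : ℚ) / (p : ℚ)) = ((a % p : ℤ) : ℚ) / p - 1/2 := by
  have hden : ((a : ℚ) / (p : ℚ)).den ≠ 1 := by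
    rw [Ne, Rat.den_div_intCast_eq_one_iff a p hp.ne']; exact h
  have habs : |p| = p := abs_of_nonneg hp.le
  have hnat : ((p.natAbs : ℕ) : ℚ) = (p : ℚ) := by
    rw [Nat.cast_natAbs, habs]
  have hfloor : ⌊(a : ℚ) / (p : ℚ)⌋ = a / p := by
    rw [← hnat, Rat.floor_intCast_div_natCast, Int.natAbs_of_nonneg hp.le]
  rw [saw, if_neg hden, hfloor]
  have hp0 : (p : ℚ) ≠ 0 := Int.cast_ne_zero.mpr hp.ne'
  have e : ((a % p : ℤ) : ℚ) = (a : ℚ) - (p : ℚ) * ((a / p : ℤ) : ℚ) := by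
    have h2 : a % p = a - p * (a / p) := by
      have := Int.emod_add_mul_ediv a p; linarith
    exact_mod_cast congrArg (Int.cast : ℤ → ℚ) h2
  rw [e]
  field_simp

private lemma dedekind_eval (p q : ℤ) (hp : 0 < p) (hpq : IsCoprime p q) :
    ∃ D E : ℤ,
      12 * (p : ℚ) * dedekindSum q p
        = ((2*q*(p-1)*(2*p-1) - 12*D - 3*p*(p-1) : ℤ) : ℚ)
      ∧ 12 * q * D = (q^2 - 1)*(p-1)*(2*p-1) + 6*p*E := by
  obtain ⟨ps, qs, hps⟩ := id hpq
  have hn : ((p.natAbs : ℕ) : ℤ) = p := Int.natAbs_of_nonneg hp.le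
  have hA1 : 2 * ∑ k ∈ Finset.range p.natAbs, (k : ℤ) = p * (p - 1) := by
    have := sum_id' p.natAbs; rw [hn] at this; exact this
  have hA2 : 6 * ∑ k ∈ Finset.range p.natAbs, (k : ℤ)^2 = p * (p - 1) * (2 * p - 1) := by
    have := sum_sq' p.natAbs; rw [hn] at this; exact this
  have hSM : ∑ k ∈ Finset.range p.natAbs, ((k : ℤ) * q) % p
      = ∑ k ∈ Finset.range p.natAbs, (k : ℤ) :=
    sum_perm' p q qs ps hp hps (fun x => x)
  have hSM2 : ∑ k ∈ Finset.range p.natAbs, (((k : ℤ) * q) % p)^2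
      = ∑ k ∈ Finset.range p.natAbs, (k : ℤ)^2 :=
    sum_perm' p q qs ps hp hps (fun x => x^2)
  have hKdef : ∑ k ∈ Finset.range p.natAbs, (k : ℤ) * (((k : ℤ) * q) % p)
      = q * (∑ k ∈ Finset.range p.natAbs, (k : ℤ)^2)
        - p * ∑ k ∈ Finset.range p.natAbs, (k : ℤ) * (((k : ℤ) * q) / p) := by
    rw [Finset.mul_sum, Finset.mul_sum, ← Finset.sum_sub_distrib]
    refine Finset.sum_congr rfl fun k _ => ?_
    have h := Int.emod_add_mul_ediv ((k : ℤ) * q) p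
    linear_combination (k : ℤ) * h
  have hE : 2*p*q*(∑ k ∈ Finset.range p.natAbs, (k : ℤ) * (((k : ℤ) * q) / p))
      = (q^2 - 1) * (∑ k ∈ Finset.range p.natAbs, (k : ℤ)^2)
        + p^2 * ∑ k ∈ Finset.range p.natAbs, (((k : ℤ) * q) / p)^2 := by
    have h1 : ∑ k ∈ Finset.range p.natAbs, (((k : ℤ) * q) % p)^2
        = q^2 * (∑ k ∈ Finset.range p.natAbs, (k : ℤ)^2)
          - 2*p*q*(∑ k ∈ Finset.range p.natAbs, (k : ℤ) * (((k : ℤ) * q) / p))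
          + p^2 * ∑ k ∈ Finset.range p.natAbs, (((k : ℤ) * q) / p)^2 := by
      rw [Finset.mul_sum, Finset.mul_sum, Finset.mul_sum, ← Finset.sum_sub_distrib,
        ← Finset.sum_add_distrib]
      refine Finset.sum_congr rfl fun k _ => ?_
      have h := Int.emod_add_mul_ediv ((k : ℤ) * q) p
      linear_combination (((k : ℤ) * q) % p + (k : ℤ) * q - p * (((k : ℤ) * q) / p)) * h
    linear_combination h1 - hSM2
  refine ⟨∑ k ∈ Finset.range p.natAbs, (k : ℤ) * (((k : ℤ) * q) / p),
    ∑ k ∈ Finset.range p.natAbs, (((k : ℤ) * q) / p)^2, ?_, ?_⟩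
  · have hp0 : (p : ℚ) ≠ 0 := Int.cast_ne_zero.mpr hp.ne'
    have hterm : ∀ k ∈ Finset.range p.natAbs,
        saw ((k : ℚ) / (p : ℚ)) * saw ((k : ℚ) * (q : ℚ) / (p : ℚ))
        = (if k = 0 then (0:ℚ) else
            ((k:ℚ)/p - 1/2) * (((((k:ℤ)*q) % p : ℤ):ℚ)/p - 1/2)) := by
      intro k hk
      by_cases h0 : k = 0
      · subst h0; simp [saw]
      · rw [if_neg h0]
        rw [Finset.mem_range] at hk
        have hkp : (k:ℤ) < p := by omega
        have hk0 : (0:ℤ) < (k:ℤ) := by exact_mod_cast Nat.pos_of_ne_zero h0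
        have h1 : ¬ p ∣ (k:ℤ) := fun hdvd => by have := Int.le_of_dvd hk0 hdvd; omega
        have h2 : ¬ p ∣ (k:ℤ)*q := fun hdvd => h1 (hpq.dvd_of_dvd_mul_right hdvd)
        rw [show ((k:ℕ):ℚ) = (((k:ℤ)):ℚ) by push_cast; ring] at *
        rw [show (((k:ℤ)):ℚ) * (q:ℚ) = ((((k:ℤ))*q : ℤ):ℚ) by push_cast; ring,
          saw_eval p (k:ℤ) hp h1, saw_eval p ((k:ℤ)*q) hp h2,
          Int.emod_eq_of_lt hk0.le hkp]
    have hded : dedekindSum q p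
        = (∑ k ∈ Finset.range p.natAbs,
            ((k:ℚ)/p - 1/2) * (((((k:ℤ)*q) % p : ℤ):ℚ)/p - 1/2)) - 1/4 := by
      have h0n : (0:ℕ) ∈ Finset.range p.natAbs := Finset.mem_range.mpr (by omega)
      rw [show dedekindSum q p = ∑ k ∈ Finset.range p.natAbs,
          saw ((k:ℚ)/(p:ℚ)) * saw ((k:ℚ)*(q:ℚ)/(p:ℚ)) from rfl]
      rw [Finset.sum_congr rfl hterm]
      rw [Finset.sum_congr rfl (fun k (_ : k ∈ Finset.range p.natAbs) => show
          (if k = 0 then (0:ℚ) else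
            ((k:ℚ)/p - 1/2) * (((((k:ℤ)*q) % p : ℤ):ℚ)/p - 1/2))
          = ((k:ℚ)/p - 1/2) * (((((k:ℤ)*q) % p : ℤ):ℚ)/p - 1/2)
            - (if k = 0 then ((k:ℚ)/p - 1/2) * (((((k:ℤ)*q) % p : ℤ):ℚ)/p - 1/2) else 0)
          from by split <;> ring)]
      rw [Finset.sum_sub_distrib, Finset.sum_ite_eq' (Finset.range p.natAbs) 0 _, if_pos h0n]
      norm_num
    rw [hded]
    have hsplitQ : (∑ k ∈ Finset.range p.natAbs,
        ((k:ℚ)/p - 1/2) * (((((k:ℤ)*q) % p : ℤ):ℚ)/p - 1/2)) * (4*(p:ℚ)^2)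
        = ((∑ k ∈ Finset.range p.natAbs, (2*(k:ℤ) - p) * (2*(((k:ℤ)*q) % p) - p) : ℤ) : ℚ) := by
      rw [Finset.sum_mul, Int.cast_sum]
      refine Finset.sum_congr rfl fun k _ => ?_
      push_cast
      field_simp
      ring
    have hJ : ∑ k ∈ Finset.range p.natAbs, (2*(k:ℤ) - p) * (2*(((k:ℤ)*q) % p) - p)
        = 4 * (∑ k ∈ Finset.range p.natAbs, (k:ℤ) * (((k:ℤ)*q) % p))
          - 2*p*(∑ k ∈ Finset.range p.natAbs, (k:ℤ))
          - 2*p*(∑ k ∈ Finset.range p.natAbs, ((k:ℤ)*q) % p)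
          + (p.natAbs : ℤ) * p^2 := by
      rw [Finset.mul_sum, Finset.mul_sum, Finset.mul_sum, ← Finset.sum_sub_distrib,
        ← Finset.sum_sub_distrib]
      rw [show (p.natAbs : ℤ) * p^2 = ∑ _k ∈ Finset.range p.natAbs, p^2 by
            rw [Finset.sum_const, Finset.card_range, nsmul_eq_mul]]
      rw [← Finset.sum_add_distrib]
      exact Finset.sum_congr rfl fun k _ => by ring
    have hZ3 : 3 * (∑ k ∈ Finset.range p.natAbs, (2*(k:ℤ) - p) * (2*(((k:ℤ)*q) % p) - p))
        = p * (2*q*(p-1)*(2*p-1)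
            - 12*(∑ k ∈ Finset.range p.natAbs, (k:ℤ) * (((k:ℤ)*q)/p)) - 3*p*(p-1))
          + 3*p^2 := by
      linear_combination 3*hJ + 12*hKdef + (-6*p)*hSM + (-6*p)*hA1 + 2*q*hA2 + 3*p^2*hn
    have hZ3Q := congrArg (Int.cast : ℤ → ℚ) hZ3
    apply mul_left_cancel₀ hp0
    push_cast at hsplitQ hZ3Q ⊢
    linear_combination 3*hsplitQ + hZ3Q
  · -- second conclusion
    have := mul_left_cancel₀ hp.ne'
      (show p * (12 * q * (∑ k ∈ Finset.range p.natAbs, (k : ℤ) * (((k : ℤ) * q) / p)))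
          = p * ((q^2 - 1)*(p-1)*(2*p-1)
              + 6*p*(∑ k ∈ Finset.range p.natAbs, (((k : ℤ) * q) / p)^2)) from by
        linear_combination 6*hE + (q^2-1)*hA2)
    exact this

theorem stmt_16 (p q r c qs ps η pc' rc' : ℤ) (hp : 0 < p)
    (hpq : IsCoprime p q) (hqs : 0 < qs) (hqs' : qs < p)
    (hinv : ps * p + qs * q = 1)
    (hrodd : Odd r) (hr : 1 < r) (hc : c = Int.gcd p r) (hc1 : 1 < c)
    (hη : η = 1 ∨ η = -1) (hdiv : c ∣ qs + η)
    (hbezout : pc' * (p / c) + rc' * (r / c) = 1) :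
    ∃ k : ℤ,
      Complex.exp (2 * Real.pi * Complex.I * ((12 * dedekindSum q p : ℚ) : ℂ) / (r : ℂ))
        * Complex.exp (2 * Real.pi * Complex.I *
            ((-(rc' * (q + qs - η * ps * p)) : ℤ) : ℂ) / ((p : ℂ) * c))
        * Complex.exp (2 * Real.pi * Complex.I *
            ((2 * η * pc' : ℤ) : ℂ) / ((r : ℂ) * c))
      = Complex.exp (2 * Real.pi * Complex.I * (k : ℂ) / (r : ℂ)) := by
  have hp0 : (p:ℚ) ≠ 0 := Int.cast_ne_zero.mpr hp.ne'
  have hr0 : (r:ℚ) ≠ 0 := Int.cast_ne_zero.mpr (by omega)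
  have hc0 : (c:ℚ) ≠ 0 := Int.cast_ne_zero.mpr (by omega)
  obtain ⟨D, E, hDE1, hDE2⟩ := dedekind_eval p q hp hpq
  have hη2 : η^2 = 1 := by rcases hη with rfl | rfl <;> norm_num
  have hq2 : q * ((2*q*(p-1)*(2*p-1) - 12*D - 3*p*(p-1)) - q - qs)
      = p * ((q^2+1)*(2*p-3) - 6*E - 3*q*(p-1) + ps) := by
    linear_combination - hinv - hDE2
  have hdvd : p ∣ ((2*q*(p-1)*(2*p-1) - 12*D - 3*p*(p-1)) - q - qs) :=
    hpq.dvd_of_dvd_mul_left ⟨_, hq2⟩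
  obtain ⟨u, hu⟩ := hdvd
  obtain ⟨mm, hmm⟩ := hdiv
  have hcp : c ∣ p := by rw [hc]; exact Int.gcd_dvd_left _ _
  have hcr : c ∣ r := by rw [hc]; exact Int.gcd_dvd_right _ _
  have hbez' : pc' * p + rc' * r = c := by
    have e1 : c * (p / c) = p := Int.mul_ediv_cancel' hcp
    have e2 : c * (r / c) = r := Int.mul_ediv_cancel' hcr
    linear_combination c * hbezout - pc' * e1 - rc' * e2
  have hZ : (2*q*(p-1)*(2*p-1) - 12*D - 3*p*(p-1)) * c
        - rc' * (q + qs - η*ps*p) * r + 2*η*pc'*p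
      = p * c * (u + η*ps + pc' * mm * (1 + η*q)) := by
    linear_combination c*hu + (pc'*p*(1+η*q))*hmm - (q+qs-η*ps*p)*hbez'
      - (pc'*p*q)*hη2 - (pc'*p*η)*hinv
  refine ⟨u + η*ps + pc' * mm * (1 + η*q), ?_⟩
  have hQ : (12 * dedekindSum q p) / (r:ℚ)
      + ((-(rc' * (q + qs - η * ps * p)) : ℤ):ℚ) / ((p:ℚ)*(c:ℚ))
      + ((2*η*pc' : ℤ):ℚ)/((r:ℚ)*(c:ℚ))
      = ((u + η*ps + pc' * mm * (1 + η*q) : ℤ):ℚ)/(r:ℚ) := by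
    have hZQ := congrArg (Int.cast : ℤ → ℚ) hZ
    push_cast at hZQ hDE1
    field_simp
    push_cast
    linear_combination (c:ℚ)*hDE1 + hZQ
  rw [← Complex.exp_add, ← Complex.exp_add]
  congr 1
  have hQC := congrArg (Rat.cast : ℚ → ℂ) hQ
  push_cast at hQC ⊢
  linear_combination (2*(Real.pi:ℂ)*Complex.I) * hQC
end
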